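/- There exists a bijection η : ℕ → ℕ such that sup_{m,n ∈ ℕ} ||η(m) − η(n)| − |m − n|| = ∞; that is, the metric space ℕ (with the distance inherited from ℝ) admits a self-bijection of infinite distortion, so the two enumerations give distance vectors lying in different clouds of the corresponding sup-metric space while projecting to the same metric space. (One such η maps 2^{n−1} to 2n−1 for each n ∈ ℕ and maps the complement of the powers of 2 bijectively onto the even numbers.) -/

import Mathlib

open ENNReal

def isP4 (n : ℕ) : Prop := 0 < n ∧ 4 ^ Nat.log 4 n = n

instance : DecidablePred isP4 := fun _ => instDecidableAnd

lemma isP4_pow (k : ℕ) : isP4 (4 ^ k) :=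
  ⟨pow_pos (by norm_num) _, by rw [Nat.log_pow (by norm_num)]⟩

lemma isP4_iff {n : ℕ} : isP4 n ↔ ∃ k, n = 4 ^ k := by
  constructor
  · rintro ⟨-, h⟩; exact ⟨_, h.symm⟩
  · rintro ⟨k, rfl⟩; exact isP4_pow k

lemma not_isP4_two_mul {n : ℕ} (h : isP4 n) : ¬ isP4 (2 * n) := by
  rw [isP4_iff] at h ⊢
  obtain ⟨k, rfl⟩ := h
  rintro ⟨j, hj⟩
  have h4 : (4 : ℕ) = 2 ^ 2 := by norm_num
  rw [h4, ← pow_mul, ← pow_mul] at hj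
  have hj' : (2:ℕ) ^ (2 * k + 1) = 2 ^ (2 * j) := by
    rw [pow_succ]; omega
  have := Nat.pow_right_injective (le_refl 2) hj'
  omega

def myf (n : ℕ) : ℕ :=
  if isP4 n then 2 * n else if 2 ∣ n ∧ isP4 (n / 2) then n / 2 else n

lemma myf_inv : Function.Involutive myf := by
  intro n
  by_cases h1 : isP4 n
  · have h2 : ¬ isP4 (2 * n) := not_isP4_two_mul h1
    have h3 : 2 ∣ 2 * n := ⟨n, rfl⟩
    simp [myf, h1, h2, h3, Nat.mul_div_cancel_left n (by norm_num : 0 < 2)]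
  · by_cases h2 : 2 ∣ n ∧ isP4 (n / 2)
    · have : 2 * (n / 2) = n := Nat.two_mul_div_two_of_even (even_iff_two_dvd.mpr h2.1)
      simp [myf, h1, h2, h2.2, this]
    · simp [myf, h1, h2]

noncomputable def eta : ℕ ≃ ℕ := Function.Involutive.toPerm myf myf_inv

lemma eta_pow (k : ℕ) : eta (4 ^ k) = 2 * 4 ^ k := by
  simp [eta, Function.Involutive.toPerm, myf, isP4_pow k]

lemma eta_pow_succ (k : ℕ) (hk : 1 ≤ k) : eta (4 ^ k + 1) = 4 ^ k + 1 := by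
  have hodd : ¬ (2 ∣ 4 ^ k + 1) := by
    have : (2:ℕ) ∣ 4 ^ k := dvd_pow (by norm_num) (by omega)
    omega
  have hnp : ¬ isP4 (4 ^ k + 1) := by
    rw [isP4_iff]
    rintro ⟨j, hj⟩
    rcases Nat.eq_zero_or_pos j with rfl | hj0
    · have h1 : 1 ≤ (4:ℕ) ^ k := Nat.one_le_two_pow.trans (Nat.pow_le_pow_left (by norm_num) k)
      rw [pow_zero] at hj
      omega
    · have : (2:ℕ) ∣ 4 ^ j := dvd_pow (by norm_num) (by omega)
      rw [← hj] at this
      exact hodd this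
  simp [eta, Function.Involutive.toPerm, myf, hnp, hodd]

/-- The metric space `ℕ` (with the distance inherited from `ℝ`) admits a self-bijection of
infinite distortion: `sup_{m,n} ||η(m) - η(n)| - |m - n|| = ∞`. -/
theorem stmt_16 :
    ∃ η : ℕ ≃ ℕ,
      (⨆ m : ℕ, ⨆ n : ℕ,
        ENNReal.ofReal (abs (abs ((η m : ℝ) - (η n : ℝ)) - abs ((m : ℝ) - (n : ℝ))))) = ⊤ := by
  refine ⟨eta, ?_⟩
  have key : ∀ j : ℕ, (j : ℝ≥0∞) ≤
      ⨆ m : ℕ, ⨆ n : ℕ,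
        ENNReal.ofReal (abs (abs ((eta m : ℝ) - (eta n : ℝ)) - abs ((m : ℝ) - (n : ℝ)))) := by
    intro j
    set k := j + 1 with hk
    refine le_trans ?_ (le_iSup_of_le (4 ^ k) (le_iSup_of_le (4 ^ k + 1) le_rfl))
    rw [eta_pow k, eta_pow_succ k (by omega)]
    have h1 : ((2 * 4 ^ k : ℕ) : ℝ) = 2 * 4 ^ k := by push_cast; ring
    have h2 : ((4 ^ k + 1 : ℕ) : ℝ) = 4 ^ k + 1 := by push_cast; ring
    have h3 : ((4 ^ k : ℕ) : ℝ) = 4 ^ k := by push_cast; ring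
    rw [h1, h2, h3]
    have h4 : (1:ℝ) ≤ 4 ^ k := one_le_pow₀ (by norm_num)
    have habs1 : |2 * (4:ℝ) ^ k - (4 ^ k + 1)| = 4 ^ k - 1 := by
      rw [abs_of_nonneg]; ring_nf; linarith
    have habs2 : |(4:ℝ) ^ k - (4 ^ k + 1)| = 1 := by
      rw [abs_sub_comm, abs_of_nonneg] <;> linarith
    rw [habs1, habs2]
    have hjk : (j : ℝ) ≤ 4 ^ k - 1 - 1 := by
      have : j + 2 ≤ 4 ^ k := by
        have := Nat.lt_pow_self (n := k) (by norm_num : 1 < 4)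
        omega
      have : (j : ℝ) + 2 ≤ ((4:ℕ) ^ k : ℝ) := by exact_mod_cast this
      push_cast at this
      linarith
    have habs3 : |(4:ℝ) ^ k - 1 - 1| = 4 ^ k - 2 := by
      rw [abs_of_nonneg] <;> linarith
    rw [habs3]
    calc (j : ℝ≥0∞) = ENNReal.ofReal j := by
          simp [ENNReal.ofReal_natCast]
      _ ≤ ENNReal.ofReal (4 ^ k - 2) := ENNReal.ofReal_le_ofReal (by linarith)
  have := iSup_le fun j : ℕ => key j
  rw [ENNReal.iSup_natCast] at this
  exact top_unique this
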